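/- arXiv:2603.02307 — 2 statements merged into one kernel-verified Lean document; each statement's English description precedes it below -/
import Mathlib

section
/- Let a : (0,∞) → (0,∞) be the FLRW scale factor expressed in conformal time, and let □_g φ = −a^{−2}∂_τ²φ − 2(∂_τa/a³)∂_τφ + a^{−2}Δφ. Then for every smooth φ : (0,∞) × ℝ³ → ℝ and every j ∈ {1,2,3}: [□_g, Ω_{0j}]φ = −x^j [□_g, ∂_τ]φ + 2(∂_τ a / a³) ∂_j φ, where Ω_{0j} = −τ ∂_j − x^j ∂_τ is the boost vector field. -/
open Real Set

noncomputable section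

/-- Scalar fields on `ℝ × ℝ³`, first coordinate: conformal time `τ`. -/
abbrev Fld : Type := ℝ → (Fin 3 → ℝ) → ℝ

/-- Partial derivative `∂_τ` in the (conformal) time variable. -/
def dτ (φ : Fld) : Fld := fun τ x => deriv (fun s => φ s x) τ

/-- Partial derivative in the `i`-th spatial variable. -/
def dx (i : Fin 3) (φ : Fld) : Fld :=
  fun τ x => deriv (fun s => φ τ (Function.update x i s)) (x i)

/-- Euclidean Laplacian in the spatial variables. -/
def lap (φ : Fld) : Fld := fun τ x => ∑ i, dx i (dx i φ) τ x

/-- FLRW wave operator in conformal time: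
`□_g φ = −a^{−2}∂_τ²φ − 2(∂_τa/a³)∂_τφ + a^{−2}Δφ`. -/
def boxc (a : ℝ → ℝ) (φ : Fld) : Fld := fun τ x =>
  -(((a τ) ^ 2)⁻¹ * dτ (dτ φ) τ x) - 2 * (deriv a τ / (a τ) ^ 3) * dτ φ τ x
    + ((a τ) ^ 2)⁻¹ * lap φ τ x

/-- Smoothness of a spacetime field on a (conformal) time interval. -/
def FSmoothOn (s : Set ℝ) (φ : Fld) : Prop :=
  ContDiffOn ℝ (⊤ : ℕ∞) (fun q : ℝ × (Fin 3 → ℝ) => φ q.1 q.2) (s ×ˢ (univ : Set (Fin 3 → ℝ)))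

namespace Stmt9Aux

abbrev E : Type := ℝ × (Fin 3 → ℝ)

def U : Set E := Set.Ioi 0 ×ˢ (univ : Set (Fin 3 → ℝ))

lemma U_open : IsOpen U := isOpen_Ioi.prod isOpen_univ

lemma mem_U {τ : ℝ} (hτ : 0 < τ) (x : Fin 3 → ℝ) : ((τ, x) : E) ∈ U := ⟨hτ, trivial⟩

def F (φ : Fld) : E → ℝ := fun q => φ q.1 q.2

def v0 : E := (1, 0)
def vx (i : Fin 3) : E := (0, Pi.single i 1)

def Dv (v : E) (G : E → ℝ) : E → ℝ := fun q => fderiv ℝ G q v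

lemma curveτ (τ : ℝ) (x : Fin 3 → ℝ) : HasDerivAt (fun s : ℝ => ((s, x) : E)) v0 τ :=
  (hasDerivAt_id τ).prodMk (hasDerivAt_const τ x)

lemma update_hasDerivAt (x : Fin 3 → ℝ) (i : Fin 3) (t : ℝ) :
    HasDerivAt (fun s : ℝ => Function.update x i s) (Pi.single i (1 : ℝ)) t := by
  rw [hasDerivAt_pi]
  intro j
  rcases eq_or_ne j i with h | h
  · subst h; simpa using hasDerivAt_id' t
  · simpa [Function.update_of_ne h, Pi.single_eq_of_ne h] using hasDerivAt_const t (x j)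

lemma curvex (τ : ℝ) (x : Fin 3 → ℝ) (i : Fin 3) (t : ℝ) :
    HasDerivAt (fun s : ℝ => ((τ, Function.update x i s) : E)) (vx i) t :=
  (hasDerivAt_const t τ).prodMk (update_hasDerivAt x i t)

lemma F_diffAt {φ : Fld} (hφ : FSmoothOn (Set.Ioi 0) φ) {τ : ℝ} (hτ : 0 < τ)
    (x : Fin 3 → ℝ) : DifferentiableAt ℝ (F φ) (τ, x) :=
  ((hφ.contDiffAt (U_open.mem_nhds (mem_U hτ x))).differentiableAt (by simp))

lemma sliceτ_hasDerivAt {φ : Fld} (hφ : FSmoothOn (Set.Ioi 0) φ) {τ : ℝ} (hτ : 0 < τ)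
    (x : Fin 3 → ℝ) :
    HasDerivAt (fun s => φ s x) (Dv v0 (F φ) (τ, x)) τ :=
  by have := (F_diffAt hφ hτ x).hasFDerivAt.comp_hasDerivAt τ (curveτ τ x); exact this

lemma dτ_eqOn {φ : Fld} (hφ : FSmoothOn (Set.Ioi 0) φ) {τ : ℝ} (hτ : 0 < τ)
    (x : Fin 3 → ℝ) : dτ φ τ x = Dv v0 (F φ) (τ, x) :=
  (sliceτ_hasDerivAt hφ hτ x).deriv

lemma slicex_hasDerivAt {φ : Fld} (hφ : FSmoothOn (Set.Ioi 0) φ) {τ : ℝ} (hτ : 0 < τ)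
    (x : Fin 3 → ℝ) (i : Fin 3) :
    HasDerivAt (fun s => φ τ (Function.update x i s)) (Dv (vx i) (F φ) (τ, x)) (x i) := by
  have h : HasFDerivAt (F φ) (fderiv ℝ (F φ) (τ, x)) (τ, Function.update x i (x i)) := by
    rw [Function.update_eq_self]; exact (F_diffAt hφ hτ x).hasFDerivAt
  exact h.comp_hasDerivAt (x i) (curvex τ x i (x i))

lemma dx_eqOn {φ : Fld} (hφ : FSmoothOn (Set.Ioi 0) φ) {τ : ℝ} (hτ : 0 < τ)
    (x : Fin 3 → ℝ) (i : Fin 3) : dx i φ τ x = Dv (vx i) (F φ) (τ, x) :=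
  (slicex_hasDerivAt hφ hτ x i).deriv

lemma Dv_smooth {G : E → ℝ} (hG : ContDiffOn ℝ (⊤ : ℕ∞) G U) (v : E) :
    ContDiffOn ℝ (⊤ : ℕ∞) (Dv v G) U :=
  (hG.fderiv_of_isOpen U_open (by simp)).clm_apply contDiffOn_const

lemma FSmoothOn_dτ {φ : Fld} (hφ : FSmoothOn (Set.Ioi 0) φ) : FSmoothOn (Set.Ioi 0) (dτ φ) := by
  refine (Dv_smooth hφ v0).congr ?_
  rintro ⟨τ, x⟩ ⟨hτ, -⟩
  exact dτ_eqOn hφ hτ x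

lemma FSmoothOn_dx {φ : Fld} (hφ : FSmoothOn (Set.Ioi 0) φ) (i : Fin 3) :
    FSmoothOn (Set.Ioi 0) (dx i φ) := by
  refine (Dv_smooth hφ (vx i)).congr ?_
  rintro ⟨τ, x⟩ ⟨hτ, -⟩
  exact dx_eqOn hφ hτ x i

lemma FSmoothOn_lap {φ : Fld} (hφ : FSmoothOn (Set.Ioi 0) φ) : FSmoothOn (Set.Ioi 0) (lap φ) :=
  ContDiffOn.sum fun i _ => FSmoothOn_dx (FSmoothOn_dx hφ i) i


lemma Dv_comm {G : E → ℝ} (hG : ContDiffOn ℝ (⊤ : ℕ∞) G U) (v w : E) {q : E}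
    (hq : q ∈ U) : Dv v (Dv w G) q = Dv w (Dv v G) q := by
  have hd : ContDiffOn ℝ (⊤ : ℕ∞) (fderiv ℝ G) U := hG.fderiv_of_isOpen U_open (by simp)
  have hdd : DifferentiableAt ℝ (fderiv ℝ G) q :=
    (hd.contDiffAt (U_open.mem_nhds hq)).differentiableAt (by simp)
  have hev : ∀ᶠ y in nhds q, HasFDerivAt G (fderiv ℝ G y) y := by
    filter_upwards [U_open.mem_nhds hq] with y hy
    exact ((hG.contDiffAt (U_open.mem_nhds hy)).differentiableAt (by simp)).hasFDerivAt
  have hsymm := second_derivative_symmetric_of_eventually_of_real hev hdd.hasFDerivAt v w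
  have key : ∀ u z : E, Dv u (Dv z G) q = fderiv ℝ (fderiv ℝ G) q u z := by
    intro u z
    have h1 : HasFDerivAt (fun p => fderiv ℝ G p z)
        ((ContinuousLinearMap.apply ℝ ℝ z).comp (fderiv ℝ (fderiv ℝ G) q)) q :=
      (ContinuousLinearMap.apply ℝ ℝ z).hasFDerivAt.comp q hdd.hasFDerivAt
    show fderiv ℝ (fun p => fderiv ℝ G p z) q u = _
    rw [h1.fderiv]; rfl
  rw [key v w, key w v, hsymm]

lemma F_dτ_eqOn {φ : Fld} (hφ : FSmoothOn (Set.Ioi 0) φ) :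
    Set.EqOn (F (dτ φ)) (Dv v0 (F φ)) U := by
  rintro ⟨σ, y⟩ ⟨hσ, -⟩; exact dτ_eqOn hφ hσ y

lemma F_dx_eqOn {φ : Fld} (hφ : FSmoothOn (Set.Ioi 0) φ) (i : Fin 3) :
    Set.EqOn (F (dx i φ)) (Dv (vx i) (F φ)) U := by
  rintro ⟨σ, y⟩ ⟨hσ, -⟩; exact dx_eqOn hφ hσ y i

lemma Dv_congr_of_eqOn {G₁ G₂ : E → ℝ} (h : Set.EqOn G₁ G₂ U) {q : E} (hq : q ∈ U) (v : E) :
    Dv v G₁ q = Dv v G₂ q := by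
  unfold Dv
  rw [Filter.EventuallyEq.fderiv_eq (h.eventuallyEq_of_mem (U_open.mem_nhds hq))]

lemma dτ_dx_comm {φ : Fld} (hφ : FSmoothOn (Set.Ioi 0) φ) (i : Fin 3) {τ : ℝ}
    (hτ : 0 < τ) (x : Fin 3 → ℝ) : dτ (dx i φ) τ x = dx i (dτ φ) τ x := by
  have hq := mem_U hτ x
  calc dτ (dx i φ) τ x = Dv v0 (F (dx i φ)) (τ, x) := dτ_eqOn (FSmoothOn_dx hφ i) hτ x
    _ = Dv v0 (Dv (vx i) (F φ)) (τ, x) := Dv_congr_of_eqOn (F_dx_eqOn hφ i) hq v0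
    _ = Dv (vx i) (Dv v0 (F φ)) (τ, x) := Dv_comm hφ v0 (vx i) hq
    _ = Dv (vx i) (F (dτ φ)) (τ, x) := (Dv_congr_of_eqOn (F_dτ_eqOn hφ) hq (vx i)).symm
    _ = dx i (dτ φ) τ x := (dx_eqOn (FSmoothOn_dτ hφ) hτ x i).symm

lemma dx_dx_comm {φ : Fld} (hφ : FSmoothOn (Set.Ioi 0) φ) (i k : Fin 3) {τ : ℝ}
    (hτ : 0 < τ) (x : Fin 3 → ℝ) : dx i (dx k φ) τ x = dx k (dx i φ) τ x := by
  have hq := mem_U hτ x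
  calc dx i (dx k φ) τ x = Dv (vx i) (F (dx k φ)) (τ, x) := dx_eqOn (FSmoothOn_dx hφ k) hτ x i
    _ = Dv (vx i) (Dv (vx k) (F φ)) (τ, x) := Dv_congr_of_eqOn (F_dx_eqOn hφ k) hq (vx i)
    _ = Dv (vx k) (Dv (vx i) (F φ)) (τ, x) := Dv_comm hφ (vx i) (vx k) hq
    _ = Dv (vx k) (F (dx i φ)) (τ, x) := (Dv_congr_of_eqOn (F_dx_eqOn hφ i) hq (vx k)).symm
    _ = dx k (dx i φ) τ x := (dx_eqOn (FSmoothOn_dx hφ i) hτ x k).symm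


lemma dτ_congr {ψ₁ ψ₂ : Fld} (h : ∀ σ ∈ Set.Ioi (0:ℝ), ∀ y, ψ₁ σ y = ψ₂ σ y)
    {τ : ℝ} (hτ : 0 < τ) (x : Fin 3 → ℝ) : dτ ψ₁ τ x = dτ ψ₂ τ x := by
  apply Filter.EventuallyEq.deriv_eq
  filter_upwards [Ioi_mem_nhds hτ] with s hs using h s hs x

lemma dx_congr {ψ₁ ψ₂ : Fld} {τ : ℝ} (h : ∀ y, ψ₁ τ y = ψ₂ τ y)
    (x : Fin 3 → ℝ) (i : Fin 3) : dx i ψ₁ τ x = dx i ψ₂ τ x := by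
  unfold dx; congr 1; funext s; exact h _

lemma sliceτ' {ψ : Fld} (hψ : FSmoothOn (Set.Ioi 0) ψ) {τ : ℝ} (hτ : 0 < τ)
    (x : Fin 3 → ℝ) : HasDerivAt (fun s => ψ s x) (dτ ψ τ x) τ := by
  rw [dτ_eqOn hψ hτ x]; exact sliceτ_hasDerivAt hψ hτ x

lemma slicex' {ψ : Fld} (hψ : FSmoothOn (Set.Ioi 0) ψ) {τ : ℝ} (hτ : 0 < τ)
    (x : Fin 3 → ℝ) (i : Fin 3) :
    HasDerivAt (fun s => ψ τ (Function.update x i s)) (dx i ψ τ x) (x i) := by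
  rw [dx_eqOn hψ hτ x i]; exact slicex_hasDerivAt hψ hτ x i

lemma coef_hasDerivAt (y : Fin 3 → ℝ) (i j : Fin 3) :
    HasDerivAt (fun s => Function.update y i s j) ((Pi.single i 1 : Fin 3 → ℝ) j) (y i) :=
  hasDerivAt_pi.mp (update_hasDerivAt y i (y i)) j

end Stmt9Aux

open Stmt9Aux in
theorem stmt9 (a : ℝ → ℝ) (ha : ContDiffOn ℝ (⊤ : ℕ∞) a (Set.Ioi 0))
    (hapos : ∀ τ > (0 : ℝ), 0 < a τ)
    (φ : Fld) (hφ : FSmoothOn (Set.Ioi 0) φ) :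
    ∀ j : Fin 3, ∀ τ > (0 : ℝ), ∀ x : Fin 3 → ℝ,
      boxc a (fun σ y => -(σ * dx j φ σ y) - y j * dτ φ σ y) τ x
          - (-(τ * dx j (boxc a φ) τ x) - x j * dτ (boxc a φ) τ x)
        = -(x j) * (boxc a (dτ φ) τ x - dτ (boxc a φ) τ x)
          + 2 * (deriv a τ / (a τ) ^ 3) * dx j φ τ x := by
  intro j τ hτ x
  have hφj : FSmoothOn (Set.Ioi 0) (dx j φ) := FSmoothOn_dx hφ j
  have hφτ : FSmoothOn (Set.Ioi 0) (dτ φ) := FSmoothOn_dτ hφ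
  have hφττ : FSmoothOn (Set.Ioi 0) (dτ (dτ φ)) := FSmoothOn_dτ hφτ
  have hφτj : FSmoothOn (Set.Ioi 0) (dτ (dx j φ)) := FSmoothOn_dτ hφj
  -- Step 1 : first time derivative of Ω
  have hΩτ : ∀ σ ∈ Set.Ioi (0:ℝ), ∀ y,
      dτ (fun σ y => -(σ * dx j φ σ y) - y j * dτ φ σ y) σ y
        = -(dx j φ σ y + σ * dτ (dx j φ) σ y) - y j * dτ (dτ φ) σ y := by
    intro σ hσ y
    have h1 : HasDerivAt (fun s => s * dx j φ s y)
        (dx j φ σ y + σ * dτ (dx j φ) σ y) σ := by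
      simpa using (hasDerivAt_id σ).fun_mul (sliceτ' hφj hσ y)
    have h2 : HasDerivAt (fun s => y j * dτ φ s y) (y j * dτ (dτ φ) σ y) σ :=
      (sliceτ' hφτ hσ y).const_mul (y j)
    exact (h1.neg.sub h2).deriv
  -- Step 2 : second time derivative of Ω
  have hΩττ : dτ (dτ (fun σ y => -(σ * dx j φ σ y) - y j * dτ φ σ y)) τ x
      = -(dτ (dx j φ) τ x + (dτ (dx j φ) τ x + τ * dτ (dτ (dx j φ)) τ x))
        - x j * dτ (dτ (dτ φ)) τ x := by
    have e := dτ_congr (ψ₂ := fun σ y =>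
      -(dx j φ σ y + σ * dτ (dx j φ) σ y) - y j * dτ (dτ φ) σ y) hΩτ hτ x
    rw [e]
    have h1 : HasDerivAt (fun s => dx j φ s x) (dτ (dx j φ) τ x) τ := sliceτ' hφj hτ x
    have h2 : HasDerivAt (fun s => s * dτ (dx j φ) s x)
        (dτ (dx j φ) τ x + τ * dτ (dτ (dx j φ)) τ x) τ := by
      simpa using (hasDerivAt_id τ).fun_mul (sliceτ' hφτj hτ x)
    have h3 : HasDerivAt (fun s => x j * dτ (dτ φ) s x) (x j * dτ (dτ (dτ φ)) τ x) τ :=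
      (sliceτ' hφττ hτ x).const_mul (x j)
    exact ((h1.add h2).neg.sub h3).deriv
  -- Step 3 : first spatial derivatives of Ω
  have hΩx : ∀ i : Fin 3, ∀ σ ∈ Set.Ioi (0:ℝ), ∀ y,
      dx i (fun σ y => -(σ * dx j φ σ y) - y j * dτ φ σ y) σ y
        = -(σ * dx i (dx j φ) σ y)
          - ((Pi.single i 1 : Fin 3 → ℝ) j * dτ φ σ y + y j * dx i (dτ φ) σ y) := by
    intro i σ hσ y
    have h1 : HasDerivAt (fun s => σ * dx j φ σ (Function.update y i s))
        (σ * dx i (dx j φ) σ y) (y i) := (slicex' hφj hσ y i).const_mul σ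
    have h2 : HasDerivAt
        (fun s => Function.update y i s j * dτ φ σ (Function.update y i s))
        ((Pi.single i 1 : Fin 3 → ℝ) j * dτ φ σ y + y j * dx i (dτ φ) σ y) (y i) := by
      simpa [Function.update_eq_self] using (coef_hasDerivAt y i j).fun_mul (slicex' hφτ hσ y i)
    exact (h1.neg.sub h2).deriv
  -- Step 4 : second spatial derivatives of Ω
  have hΩxx : ∀ i : Fin 3,
      dx i (dx i (fun σ y => -(σ * dx j φ σ y) - y j * dτ φ σ y)) τ x
        = -(τ * dx i (dx i (dx j φ)) τ x)
          - ((Pi.single i 1 : Fin 3 → ℝ) j * dx i (dτ φ) τ x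
            + ((Pi.single i 1 : Fin 3 → ℝ) j * dx i (dτ φ) τ x + x j * dx i (dx i (dτ φ)) τ x)) := by
    intro i
    have e := dx_congr (ψ₂ := fun σ y => -(σ * dx i (dx j φ) σ y)
      - ((Pi.single i 1 : Fin 3 → ℝ) j * dτ φ σ y + y j * dx i (dτ φ) σ y)) (hΩx i τ hτ) x i
    rw [e]
    have h1 : HasDerivAt (fun s => τ * dx i (dx j φ) τ (Function.update x i s))
        (τ * dx i (dx i (dx j φ)) τ x) (x i) :=
      (slicex' (FSmoothOn_dx hφj i) hτ x i).const_mul τ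
    have h2 : HasDerivAt
        (fun s => (Pi.single i 1 : Fin 3 → ℝ) j * dτ φ τ (Function.update x i s))
        ((Pi.single i 1 : Fin 3 → ℝ) j * dx i (dτ φ) τ x) (x i) :=
      (slicex' hφτ hτ x i).const_mul _
    have h3 : HasDerivAt
        (fun s => Function.update x i s j * dx i (dτ φ) τ (Function.update x i s))
        ((Pi.single i 1 : Fin 3 → ℝ) j * dx i (dτ φ) τ x + x j * dx i (dx i (dτ φ)) τ x) (x i) := by
      simpa [Function.update_eq_self] using
        (coef_hasDerivAt x i j).fun_mul (slicex' (FSmoothOn_dx hφτ i) hτ x i)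
    exact (h1.neg.sub (h2.add h3)).deriv
  -- the single sum
  have hsingle : ∑ i : Fin 3, (Pi.single i 1 : Fin 3 → ℝ) j * dx i (dτ φ) τ x = dx j (dτ φ) τ x := by
    simp [Pi.single_apply, ite_mul]
  -- Step 5 : the Laplacian of Ω
  have hlapΩ : lap (fun σ y => -(σ * dx j φ σ y) - y j * dτ φ σ y) τ x
      = -(τ * ∑ i : Fin 3, dx i (dx i (dx j φ)) τ x)
        - (2 * dx j (dτ φ) τ x + x j * ∑ i : Fin 3, dx i (dx i (dτ φ)) τ x) := by
    have h0 : lap (fun σ y => -(σ * dx j φ σ y) - y j * dτ φ σ y) τ x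
        = ∑ i : Fin 3, (-(τ * dx i (dx i (dx j φ)) τ x)
          - ((Pi.single i 1 : Fin 3 → ℝ) j * dx i (dτ φ) τ x
            + ((Pi.single i 1 : Fin 3 → ℝ) j * dx i (dτ φ) τ x + x j * dx i (dx i (dτ φ)) τ x))) :=
      Finset.sum_congr rfl fun i _ => hΩxx i
    rw [h0, Finset.sum_sub_distrib, Finset.sum_add_distrib, Finset.sum_add_distrib]
    simp only [Finset.sum_neg_distrib, ← Finset.mul_sum, hsingle]
    ring
  -- Step 6 : spatial derivative of boxc a φ
  have hdxjBox : dx j (boxc a φ) τ x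
      = -(((a τ) ^ 2)⁻¹ * dx j (dτ (dτ φ)) τ x)
        - 2 * (deriv a τ / (a τ) ^ 3) * dx j (dτ φ) τ x
        + ((a τ) ^ 2)⁻¹ * dx j (lap φ) τ x := by
    have h1 : HasDerivAt (fun s => ((a τ) ^ 2)⁻¹ * dτ (dτ φ) τ (Function.update x j s))
        (((a τ) ^ 2)⁻¹ * dx j (dτ (dτ φ)) τ x) (x j) := (slicex' hφττ hτ x j).const_mul _
    have h2 : HasDerivAt
        (fun s => 2 * (deriv a τ / (a τ) ^ 3) * dτ φ τ (Function.update x j s))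
        (2 * (deriv a τ / (a τ) ^ 3) * dx j (dτ φ) τ x) (x j) :=
      (slicex' hφτ hτ x j).const_mul _
    have h3 : HasDerivAt (fun s => ((a τ) ^ 2)⁻¹ * lap φ τ (Function.update x j s))
        (((a τ) ^ 2)⁻¹ * dx j (lap φ) τ x) (x j) :=
      (slicex' (FSmoothOn_lap hφ) hτ x j).const_mul _
    exact ((h1.neg.sub h2).add h3).deriv
  -- Step 7 : spatial derivative of lap φ
  have hdxjLap : dx j (lap φ) τ x = ∑ i : Fin 3, dx j (dx i (dx i φ)) τ x :=
    (HasDerivAt.fun_sum fun i _ => slicex' (FSmoothOn_dx (FSmoothOn_dx hφ i) i) hτ x j).deriv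
  -- commutation lemmas
  have hc1 : dτ (dx j φ) τ x = dx j (dτ φ) τ x := dτ_dx_comm hφ j hτ x
  have hc2 : dτ (dτ (dx j φ)) τ x = dx j (dτ (dτ φ)) τ x := by
    have e := dτ_congr (ψ₁ := dτ (dx j φ)) (ψ₂ := dx j (dτ φ))
      (fun σ hσ y => dτ_dx_comm hφ j hσ y) hτ x
    rw [e]
    exact dτ_dx_comm hφτ j hτ x
  have hc3 : ∀ i : Fin 3, dx i (dx i (dx j φ)) τ x = dx j (dx i (dx i φ)) τ x := by
    intro i
    have e := dx_congr (ψ₁ := dx i (dx j φ)) (ψ₂ := dx j (dx i φ))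
      (fun y => dx_dx_comm hφ i j hτ y) x i
    rw [e]
    exact dx_dx_comm (FSmoothOn_dx hφ i) i j hτ x
  have hc3' : ∑ i : Fin 3, dx i (dx i (dx j φ)) τ x
      = ∑ i : Fin 3, dx j (dx i (dx i φ)) τ x :=
    Finset.sum_congr rfl fun i _ => hc3 i
  -- expand the two boxc's that must be expanded (they are definitional)
  have hbox1 : boxc a (fun σ y => -(σ * dx j φ σ y) - y j * dτ φ σ y) τ x
      = -(((a τ) ^ 2)⁻¹ * dτ (dτ (fun σ y => -(σ * dx j φ σ y) - y j * dτ φ σ y)) τ x)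
        - 2 * (deriv a τ / (a τ) ^ 3)
            * dτ (fun σ y => -(σ * dx j φ σ y) - y j * dτ φ σ y) τ x
        + ((a τ) ^ 2)⁻¹ * lap (fun σ y => -(σ * dx j φ σ y) - y j * dτ φ σ y) τ x := rfl
  have hbox2 : boxc a (dτ φ) τ x
      = -(((a τ) ^ 2)⁻¹ * dτ (dτ (dτ φ)) τ x)
        - 2 * (deriv a τ / (a τ) ^ 3) * dτ (dτ φ) τ x
        + ((a τ) ^ 2)⁻¹ * lap (dτ φ) τ x := rfl
  have hlapτ : lap (dτ φ) τ x = ∑ i : Fin 3, dx i (dx i (dτ φ)) τ x := rfl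
  rw [hbox1, hbox2, hΩττ, hΩτ τ hτ x, hlapΩ, hdxjBox, hdxjLap, hlapτ, hc1, hc2, hc3']
  ring


end
end

section
/- Let a : (0,∞) → (0,∞) be the FLRW scale factor expressed in conformal time, and let □_g φ = −a^{−2}∂_τ²φ − 2(∂_τa/a³)∂_τφ + a^{−2}Δφ. Then for every smooth φ : (0,∞) × ℝ³ → ℝ: [□_g, S]φ = 2(1 + τ ∂_τ a / a) □_g φ + 2( ∂_τ a / a³ + τ (a ∂_τ² a − (∂_τ a)²) a^{−4} ) ∂_τ φ, where S = τ ∂_τ + x^i ∂_i is the scaling vector field (with summation over i = 1,2,3). -/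
open Real Set

noncomputable section

namespace S10

abbrev E : Type := ℝ × (Fin 3 → ℝ)

def U : Set E := (Set.Ioi 0) ×ˢ (univ : Set (Fin 3 → ℝ))

lemma hU : IsOpen U := isOpen_Ioi.prod isOpen_univ

lemma mem_U {τ : ℝ} {x : Fin 3 → ℝ} (h : 0 < τ) : ((τ, x) : E) ∈ U := by
  constructor <;> simp [h]

def vt : E := (1, 0)
def vx (i : Fin 3) : E := (0, Pi.single i 1)

/-- Directional derivative. -/
def D (v : E) (f : E → ℝ) : E → ℝ := fun p => fderiv ℝ f p v

variable {f g : E → ℝ} {p q : E} {v w : E}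

lemma smooth_diff (hf : ContDiffOn ℝ (⊤:ℕ∞) f U) (hp : p ∈ U) : DifferentiableAt ℝ f p :=
  (hf.contDiffAt (hU.mem_nhds hp)).differentiableAt (by simp)

lemma D_smooth (hf : ContDiffOn ℝ (⊤:ℕ∞) f U) (v : E) : ContDiffOn ℝ (⊤:ℕ∞) (D v f) U := by
  have h := hf.fderiv_of_isOpen hU (m := (⊤:ℕ∞)) (by exact_mod_cast le_top)
  exact h.clm_apply contDiffOn_const

lemma D_congr (hfg : ∀ q ∈ U, f q = g q) (hp : p ∈ U) : D v f p = D v g p := by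
  have h : f =ᶠ[nhds p] g := Filter.eventuallyEq_of_mem (hU.mem_nhds hp) hfg
  unfold D; rw [h.fderiv_eq]

lemma D_comm (hf : ContDiffOn ℝ (⊤:ℕ∞) f U) (hp : p ∈ U) (v w : E) :
    D v (D w f) p = D w (D v f) p := by
  have hsym : IsSymmSndFDerivAt ℝ f p :=
    (hf.contDiffAt (hU.mem_nhds hp)).isSymmSndFDerivAt
      (by rw [minSmoothness_of_isRCLikeNormedField]; exact WithTop.coe_le_coe.mpr (le_top : (2:ℕ∞) ≤ ⊤))
  have hd : DifferentiableAt ℝ (fderiv ℝ f) p :=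
    ((hf.fderiv_of_isOpen hU (m := (⊤:ℕ∞)) (by exact_mod_cast le_top)).contDiffAt
      (hU.mem_nhds hp)).differentiableAt (by simp)
  have e1 : ∀ u u' : E, D u (D u' f) p = fderiv ℝ (fderiv ℝ f) p u u' := by
    intro u u'
    unfold D
    rw [fderiv_clm_apply hd (differentiableAt_const u')]
    simp
  rw [e1, e1, hsym]

/-! ### slice lemmas -/

lemma hasDerivAt_slice_t {τ : ℝ} {x : Fin 3 → ℝ} (hf : DifferentiableAt ℝ f (τ, x)) :
    HasDerivAt (fun s => f (s, x)) (D vt f (τ, x)) τ := by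
  have h1 : HasDerivAt (fun s : ℝ => ((s, x) : E)) vt τ := by
    simpa [vt] using ((hasDerivAt_id τ).prodMk (hasDerivAt_const τ x))
  exact hf.hasFDerivAt.comp_hasDerivAt τ h1

lemma update_line (x : Fin 3 → ℝ) (i : Fin 3) (s : ℝ) :
    Function.update x i s = x + (s - x i) • (Pi.single i 1 : Fin 3 → ℝ) := by
  funext j
  rcases eq_or_ne j i with h | h
  · subst h; simp
  · simp [Function.update_apply, h, Pi.single_apply, h]

lemma hasDerivAt_slice_x {τ : ℝ} {x : Fin 3 → ℝ} {i : Fin 3}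
    (hf : DifferentiableAt ℝ f (τ, x)) :
    HasDerivAt (fun s => f (τ, Function.update x i s)) (D (vx i) f (τ, x)) (x i) := by
  have h0 : HasDerivAt (fun s : ℝ => x + (s - x i) • (Pi.single i 1 : Fin 3 → ℝ)) (Pi.single i 1) (x i) := by
    have h1 : HasDerivAt (fun s : ℝ => s - x i) 1 (x i) := (hasDerivAt_id (x i)).sub_const (x i)
    simpa using (h1.smul_const (Pi.single i (1:ℝ))).const_add x
  have h1 : HasDerivAt (fun s : ℝ => ((τ, x + (s - x i) • (Pi.single i 1 : Fin 3 → ℝ)) : E)) (vx i) (x i) := by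
    simpa [vx] using (hasDerivAt_const (x i) τ).prodMk h0
  have hf' : HasFDerivAt f (fderiv ℝ f (τ, x))
      ((τ, x + (x i - x i) • (Pi.single i 1 : Fin 3 → ℝ)) : E) := by
    simpa using hf.hasFDerivAt
  have h2 := hf'.comp_hasDerivAt (x i) h1
  simp only [Function.comp_def] at h2
  have h3 : (fun s => f (τ, Function.update x i s))
      = fun s => f (τ, x + (s - x i) • (Pi.single i 1 : Fin 3 → ℝ)) := by
    funext s; rw [update_line]
  rw [h3]
  exact h2

/-- `∂_τ` of a field that coincides with a smooth `g` on `U`. -/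
lemma dtau_eq {F : Fld} (hg : ContDiffOn ℝ (⊤:ℕ∞) g U)
    (hfg : ∀ q ∈ U, F q.1 q.2 = g q) {τ : ℝ} {x : Fin 3 → ℝ} (hp : ((τ, x) : E) ∈ U) :
    deriv (fun s => F s x) τ = D vt g (τ, x) := by
  have hne : (fun s => F s x) =ᶠ[nhds τ] (fun s => g (s, x)) := by
    have hcont : Continuous (fun s : ℝ => ((s, x) : E)) := continuous_id.prodMk continuous_const
    have hm : {s : ℝ | ((s, x) : E) ∈ U} ∈ nhds τ := (hU.preimage hcont).mem_nhds hp
    filter_upwards [hm] with s hs using hfg (s, x) hs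
  rw [hne.deriv_eq]
  exact (hasDerivAt_slice_t (smooth_diff hg hp)).deriv

lemma dx_eq {F : Fld} {i : Fin 3} (hg : ContDiffOn ℝ (⊤:ℕ∞) g U)
    (hfg : ∀ q ∈ U, F q.1 q.2 = g q) {τ : ℝ} {x : Fin 3 → ℝ} (hp : ((τ, x) : E) ∈ U) :
    deriv (fun s => F τ (Function.update x i s)) (x i) = D (vx i) g (τ, x) := by
  have hne : (fun s => F τ (Function.update x i s))
      =ᶠ[nhds (x i)] (fun s => g (τ, Function.update x i s)) := by
    have hcont : Continuous (fun s : ℝ => ((τ, Function.update x i s) : E)) := by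
      have : Continuous (fun s : ℝ => Function.update x i s) := by
        have : Continuous (fun s : ℝ => x + (s - x i) • (Pi.single i 1 : Fin 3 → ℝ)) := by fun_prop
        simpa [funext fun s => update_line x i s] using this
      exact continuous_const.prodMk this
    have hm : {s : ℝ | ((τ, Function.update x i s) : E) ∈ U} ∈ nhds (x i) := by
      refine (hU.preimage hcont).mem_nhds ?_
      simpa using hp
    filter_upwards [hm] with s hs using hfg _ hs
  rw [hne.deriv_eq]
  exact (hasDerivAt_slice_x (smooth_diff hg hp)).deriv

/-! ### computation rules for `D` -/

lemma D_add (hf : DifferentiableAt ℝ f p) (hg : DifferentiableAt ℝ g p) (v : E) :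
    D v (fun q => f q + g q) p = D v f p + D v g p := by
  unfold D; rw [fderiv_fun_add hf hg]; simp

lemma D_sub (hf : DifferentiableAt ℝ f p) (hg : DifferentiableAt ℝ g p) (v : E) :
    D v (fun q => f q - g q) p = D v f p - D v g p := by
  unfold D; rw [fderiv_fun_sub hf hg]; simp

lemma D_neg (v : E) : D v (fun q => -(f q)) p = -(D v f p) := by
  unfold D; rw [fderiv_fun_neg]; simp

lemma D_mul (hf : DifferentiableAt ℝ f p) (hg : DifferentiableAt ℝ g p) (v : E) :
    D v (fun q => f q * g q) p = D v f p * g p + f p * D v g p := by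
  unfold D; rw [fderiv_fun_mul hf hg]; simp; ring

lemma D_sum {F : Fin 3 → E → ℝ} (hF : ∀ i, DifferentiableAt ℝ (F i) p) (v : E) :
    D v (fun q => ∑ i, F i q) p = ∑ i, D v (F i) p := by
  unfold D
  rw [fderiv_fun_sum (fun i _ => hF i)]
  simp

lemma D_fst (v : E) : D v (fun q : E => q.1) p = v.1 := by
  unfold D
  rw [(hasFDerivAt_fst (p := p)).fderiv]
  rfl

lemma D_coord (i : Fin 3) (v : E) : D v (fun q : E => q.2 i) p = v.2 i := by
  unfold D
  have h : (fun q : E => q.2 i)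
      = ((ContinuousLinearMap.proj i : (Fin 3 → ℝ) →L[ℝ] ℝ).comp
          (ContinuousLinearMap.snd ℝ ℝ (Fin 3 → ℝ))) := rfl
  rw [h, ContinuousLinearMap.fderiv]
  rfl

lemma D_time {c : ℝ → ℝ} {c' : ℝ} (hc : HasDerivAt c c' p.1) (v : E) :
    D v (fun q : E => c q.1) p = c' * v.1 := by
  unfold D
  have h := hc.hasFDerivAt.comp p (hasFDerivAt_fst (p := p))
  have h2 : (fun q : E => c q.1) = c ∘ Prod.fst := rfl
  rw [h2, h.fderiv]
  simp [mul_comm]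

/-! ### smoothness of building blocks -/

lemma sm_fst : ContDiffOn ℝ (⊤:ℕ∞) (fun q : E => q.1) U := contDiff_fst.contDiffOn

lemma sm_coord (i : Fin 3) : ContDiffOn ℝ (⊤:ℕ∞) (fun q : E => q.2 i) U :=
  (((ContinuousLinearMap.proj i : (Fin 3 → ℝ) →L[ℝ] ℝ).contDiff).comp contDiff_snd).contDiffOn

lemma sm_time {c : ℝ → ℝ} (hc : ContDiffOn ℝ (⊤:ℕ∞) c (Set.Ioi 0)) :
    ContDiffOn ℝ (⊤:ℕ∞) (fun q : E => c q.1) U :=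
  hc.comp contDiff_fst.contDiffOn (fun _ hq => hq.1)

/-! ### product rules -/

lemma D_mul_fst (hg : ContDiffOn ℝ (⊤:ℕ∞) g U) (hq : q ∈ U) (v : E) :
    D v (fun r : E => r.1 * g r) q = v.1 * g q + q.1 * D v g q := by
  have h := D_mul (f := fun r : E => r.1) (g := g) differentiableAt_fst (smooth_diff hg hq) v
  rw [D_fst] at h; exact h

lemma D_mul_coord (i : Fin 3) (hg : ContDiffOn ℝ (⊤:ℕ∞) g U) (hq : q ∈ U) (v : E) :
    D v (fun r : E => r.2 i * g r) q = v.2 i * g q + q.2 i * D v g q := by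
  have hc : DifferentiableAt ℝ (fun r : E => r.2 i) q := smooth_diff (sm_coord i) hq
  have h := D_mul (f := fun r : E => r.2 i) (g := g) hc (smooth_diff hg hq) v
  rw [D_coord] at h; exact h

lemma D_mul_time {c : ℝ → ℝ} {c' : ℝ} (hc : HasDerivAt c c' q.1)
    (hg : ContDiffOn ℝ (⊤:ℕ∞) g U) (hq : q ∈ U) (v : E) :
    D v (fun r : E => c r.1 * g r) q = c' * v.1 * g q + c q.1 * D v g q := by
  have hcd : DifferentiableAt ℝ (fun r : E => c r.1) q :=
    hc.differentiableAt.comp q differentiableAt_fst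
  have h := D_mul (f := fun r : E => c r.1) (g := g) hcd (smooth_diff hg hq) v
  rw [D_time hc] at h; exact h

lemma D_sum_coord {G : Fin 3 → E → ℝ} (hG : ∀ i, ContDiffOn ℝ (⊤:ℕ∞) (G i) U)
    (hq : q ∈ U) (v : E) :
    D v (fun r : E => ∑ i, r.2 i * G i r) q
      = ∑ i, (v.2 i * G i q + q.2 i * D v (G i) q) := by
  have h := D_sum (F := fun i => fun r : E => r.2 i * G i r)
    (fun i => smooth_diff ((sm_coord i).mul (hG i)) hq) v
  exact h.trans (Finset.sum_congr rfl fun i _ => D_mul_coord i (hG i) hq v)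


/-! ### canonical smooth representatives -/

variable (a : ℝ → ℝ) (φ : Fld)

def Φ : E → ℝ := fun q => φ q.1 q.2

def Lf : E → ℝ := fun q => ∑ j, D (vx j) (D (vx j) (Φ φ)) q

def Pf : E → ℝ := fun q => q.1 * D vt (Φ φ) q + ∑ i, q.2 i * D (vx i) (Φ φ) q

def Qt : E → ℝ := fun q =>
  D vt (Φ φ) q + q.1 * D vt (D vt (Φ φ)) q + ∑ i, q.2 i * D (vx i) (D vt (Φ φ)) q

def Qx (j : Fin 3) : E → ℝ := fun q =>
  q.1 * D (vx j) (D vt (Φ φ)) q + D (vx j) (Φ φ) q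
    + ∑ i, q.2 i * D (vx i) (D (vx j) (Φ φ)) q

def Bf : E → ℝ := fun q =>
  -(((a q.1) ^ 2)⁻¹ * D vt (D vt (Φ φ)) q)
    - 2 * (deriv a q.1 / (a q.1) ^ 3) * D vt (Φ φ) q
    + ((a q.1) ^ 2)⁻¹ * Lf φ q

section withphi

variable {a : ℝ → ℝ} {φ : Fld}
variable (hφ : ContDiffOn ℝ (⊤:ℕ∞) (Φ φ) U)

include hφ

lemma sm_Lf : ContDiffOn ℝ (⊤:ℕ∞) (Lf φ) U :=
  ContDiffOn.sum fun j _ => D_smooth (D_smooth hφ (vx j)) (vx j)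

lemma sm_Pf : ContDiffOn ℝ (⊤:ℕ∞) (Pf φ) U :=
  (sm_fst.mul (D_smooth hφ vt)).add
    (ContDiffOn.sum fun i _ => (sm_coord i).mul (D_smooth hφ (vx i)))

lemma sm_Qt : ContDiffOn ℝ (⊤:ℕ∞) (Qt φ) U :=
  ((D_smooth hφ vt).add (sm_fst.mul (D_smooth (D_smooth hφ vt) vt))).add
    (ContDiffOn.sum fun i _ => (sm_coord i).mul (D_smooth (D_smooth hφ vt) (vx i)))

lemma sm_Qx (j : Fin 3) : ContDiffOn ℝ (⊤:ℕ∞) (Qx φ j) U :=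
  ((sm_fst.mul (D_smooth (D_smooth hφ vt) (vx j))).add (D_smooth hφ (vx j))).add
    (ContDiffOn.sum fun i _ => (sm_coord i).mul (D_smooth (D_smooth hφ (vx j)) (vx i)))

lemma sm_Bf (ha : ContDiffOn ℝ (⊤:ℕ∞) a (Set.Ioi 0)) (hapos : ∀ t > (0:ℝ), 0 < a t) :
    ContDiffOn ℝ (⊤:ℕ∞) (Bf a φ) U := by
  have hane : ∀ s ∈ Set.Ioi (0:ℝ), a s ≠ 0 := fun s hs => ne_of_gt (hapos s hs)
  have hia : ContDiffOn ℝ (⊤:ℕ∞) (fun s : ℝ => ((a s) ^ 2)⁻¹) (Set.Ioi 0) :=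
    (ha.pow 2).inv (fun s hs => pow_ne_zero 2 (hane s hs))
  have hda : ContDiffOn ℝ (⊤:ℕ∞) (deriv a) (Set.Ioi 0) :=
    ha.deriv_of_isOpen isOpen_Ioi (m := (⊤:ℕ∞)) (by exact_mod_cast le_top)
  have hc2 : ContDiffOn ℝ (⊤:ℕ∞) (fun s : ℝ => 2 * (deriv a s / (a s) ^ 3)) (Set.Ioi 0) :=
    contDiffOn_const.mul (hda.div (ha.pow 3) (fun s hs => pow_ne_zero 3 (hane s hs)))
  exact (((sm_time hia).mul (D_smooth (D_smooth hφ vt) vt)).neg.sub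
    ((sm_time hc2).mul (D_smooth hφ vt))).add ((sm_time hia).mul (sm_Lf hφ))

/-! ### identification of the fields with their smooth representatives on `U` -/

lemma eq_dt : ∀ q ∈ U, dτ φ q.1 q.2 = D vt (Φ φ) q := by
  rintro ⟨σ, y⟩ hq
  exact dtau_eq hφ (fun _ _ => rfl) hq

lemma eq_dx (i : Fin 3) : ∀ q ∈ U, dx i φ q.1 q.2 = D (vx i) (Φ φ) q := by
  rintro ⟨σ, y⟩ hq
  exact dx_eq hφ (fun _ _ => rfl) hq

lemma eq_dtt : ∀ q ∈ U, dτ (dτ φ) q.1 q.2 = D vt (D vt (Φ φ)) q := by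
  rintro ⟨σ, y⟩ hq
  exact dtau_eq (D_smooth hφ vt) (eq_dt hφ) hq

lemma eq_lap : ∀ q ∈ U, lap φ q.1 q.2 = Lf φ q := by
  rintro ⟨σ, y⟩ hq
  show ∑ i, dx i (dx i φ) σ y = _
  exact Finset.sum_congr rfl fun i _ =>
    dx_eq (D_smooth hφ (vx i)) (eq_dx hφ i) hq

lemma eq_box : ∀ q ∈ U, boxc a φ q.1 q.2 = Bf a φ q := by
  intro q hq
  show -(((a q.1) ^ 2)⁻¹ * dτ (dτ φ) q.1 q.2)
      - 2 * (deriv a q.1 / (a q.1) ^ 3) * dτ φ q.1 q.2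
      + ((a q.1) ^ 2)⁻¹ * lap φ q.1 q.2 = _
  rw [eq_dt hφ q hq, eq_dtt hφ q hq, eq_lap hφ q hq]
  rfl

lemma eq_S : ∀ q ∈ U,
    (fun σ y => σ * dτ φ σ y + ∑ i, y i * dx i φ σ y) q.1 q.2 = Pf φ q := by
  intro q hq
  show q.1 * dτ φ q.1 q.2 + ∑ i, q.2 i * dx i φ q.1 q.2 = _
  rw [eq_dt hφ q hq]
  congr 1
  exact Finset.sum_congr rfl fun i _ => by rw [eq_dx hφ i q hq]

/-! ### first derivatives of the scaling field -/

lemma D_Pf {q : E} (hq : q ∈ U) (v : E) :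
    D v (Pf φ) q = v.1 * D vt (Φ φ) q + q.1 * D v (D vt (Φ φ)) q
      + ∑ i, (v.2 i * D (vx i) (Φ φ) q + q.2 i * D v (D (vx i) (Φ φ)) q) := by
  have h1 : ContDiffOn ℝ (⊤:ℕ∞) (fun r : E => r.1 * D vt (Φ φ) r) U :=
    sm_fst.mul (D_smooth hφ vt)
  have h2 : ContDiffOn ℝ (⊤:ℕ∞) (fun r : E => ∑ i, r.2 i * D (vx i) (Φ φ) r) U :=
    ContDiffOn.sum fun i _ => (sm_coord i).mul (D_smooth hφ (vx i))
  calc D v (Pf φ) q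
      = D v (fun r : E => r.1 * D vt (Φ φ) r) q
        + D v (fun r : E => ∑ i, r.2 i * D (vx i) (Φ φ) r) q :=
        D_add (smooth_diff h1 hq) (smooth_diff h2 hq) v
    _ = _ := by
        rw [D_mul_fst (D_smooth hφ vt) hq v,
          D_sum_coord (fun i => D_smooth hφ (vx i)) hq v]

lemma eq_dS_t : ∀ q ∈ U,
    dτ (fun σ y => σ * dτ φ σ y + ∑ i, y i * dx i φ σ y) q.1 q.2 = Qt φ q := by
  rintro ⟨σ, y⟩ hq
  have h0 : dτ (fun σ y => σ * dτ φ σ y + ∑ i, y i * dx i φ σ y) σ y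
      = D vt (Pf φ) (σ, y) :=
    dtau_eq (F := fun σ y => σ * dτ φ σ y + ∑ i, y i * dx i φ σ y)
      (sm_Pf hφ) (eq_S hφ) hq
  show dτ _ σ y = _
  rw [h0, D_Pf hφ hq vt]
  have hsum : ∀ i : Fin 3,
      vt.2 i * D (vx i) (Φ φ) (σ, y) + (σ, y).2 i * D vt (D (vx i) (Φ φ)) (σ, y)
      = (σ, y).2 i * D (vx i) (D vt (Φ φ)) (σ, y) := by
    intro i
    rw [D_comm hφ hq vt (vx i)]
    simp [vt]
  rw [Finset.sum_congr rfl fun i _ => hsum i]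
  show (1:ℝ) * _ + _ + _ = _
  unfold Qt
  ring

lemma eq_dS_x (j : Fin 3) : ∀ q ∈ U,
    dx j (fun σ y => σ * dτ φ σ y + ∑ i, y i * dx i φ σ y) q.1 q.2 = Qx φ j q := by
  rintro ⟨σ, y⟩ hq
  have h0 : dx j (fun σ y => σ * dτ φ σ y + ∑ i, y i * dx i φ σ y) σ y
      = D (vx j) (Pf φ) (σ, y) :=
    dx_eq (F := fun σ y => σ * dτ φ σ y + ∑ i, y i * dx i φ σ y)
      (sm_Pf hφ) (eq_S hφ) hq
  show dx j _ σ y = _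
  rw [h0, D_Pf hφ hq (vx j)]
  have hsum : ∑ i, ((vx j).2 i * D (vx i) (Φ φ) (σ, y)
        + (σ, y).2 i * D (vx j) (D (vx i) (Φ φ)) (σ, y))
      = D (vx j) (Φ φ) (σ, y)
        + ∑ i, (σ, y).2 i * D (vx i) (D (vx j) (Φ φ)) (σ, y) := by
    rw [Finset.sum_add_distrib]
    congr 1
    · rw [Finset.sum_eq_single j]
      · simp [vx]
      · intro b _ hb
        simp [vx, Pi.single_apply, hb]
      · intro h; exact absurd (Finset.mem_univ j) h
    · exact Finset.sum_congr rfl fun i _ => by rw [D_comm hφ hq (vx j) (vx i)]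
  rw [hsum]
  show (vx j).1 * _ + _ + _ = _
  have hv : (vx j).1 = 0 := rfl
  rw [hv]
  unfold Qx
  ring

/-! ### second derivatives of the scaling field -/

lemma D_Qt {q : E} (hq : q ∈ U) :
    D vt (Qt φ) q = 2 * D vt (D vt (Φ φ)) q + q.1 * D vt (D vt (D vt (Φ φ))) q
      + ∑ i, q.2 i * D (vx i) (D vt (D vt (Φ φ))) q := by
  have hA : ContDiffOn ℝ (⊤:ℕ∞)
      (fun r : E => D vt (Φ φ) r + r.1 * D vt (D vt (Φ φ)) r) U :=
    (D_smooth hφ vt).add (sm_fst.mul (D_smooth (D_smooth hφ vt) vt))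
  have hB : ContDiffOn ℝ (⊤:ℕ∞)
      (fun r : E => ∑ i, r.2 i * D (vx i) (D vt (Φ φ)) r) U :=
    ContDiffOn.sum fun i _ => (sm_coord i).mul (D_smooth (D_smooth hφ vt) (vx i))
  calc D vt (Qt φ) q
      = D vt (fun r : E => D vt (Φ φ) r + r.1 * D vt (D vt (Φ φ)) r) q
        + D vt (fun r : E => ∑ i, r.2 i * D (vx i) (D vt (Φ φ)) r) q :=
        D_add (smooth_diff hA hq) (smooth_diff hB hq) vt
    _ = (D vt (D vt (Φ φ)) q
          + (vt.1 * D vt (D vt (Φ φ)) q + q.1 * D vt (D vt (D vt (Φ φ))) q))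
        + ∑ i, (vt.2 i * D (vx i) (D vt (Φ φ)) q
          + q.2 i * D vt (D (vx i) (D vt (Φ φ))) q) := by
        rw [D_add (smooth_diff (D_smooth hφ vt) hq)
            (smooth_diff (sm_fst.mul (D_smooth (D_smooth hφ vt) vt)) hq) vt,
          D_mul_fst (D_smooth (D_smooth hφ vt) vt) hq vt,
          D_sum_coord (fun i => D_smooth (D_smooth hφ vt) (vx i)) hq vt]
    _ = _ := by
        have hsum : ∀ i : Fin 3,
            vt.2 i * D (vx i) (D vt (Φ φ)) q + q.2 i * D vt (D (vx i) (D vt (Φ φ))) q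
            = q.2 i * D (vx i) (D vt (D vt (Φ φ))) q := by
          intro i
          rw [D_comm (D_smooth hφ vt) hq vt (vx i)]
          simp [vt]
        rw [Finset.sum_congr rfl fun i _ => hsum i]
        show _ + ((1:ℝ) * _ + _) + _ = _
        ring

lemma D_Qx {q : E} (j : Fin 3) (hq : q ∈ U) :
    D (vx j) (Qx φ j) q
      = q.1 * D vt (D (vx j) (D (vx j) (Φ φ))) q
        + 2 * D (vx j) (D (vx j) (Φ φ)) q
        + ∑ i, q.2 i * D (vx i) (D (vx j) (D (vx j) (Φ φ))) q := by
  have hA : ContDiffOn ℝ (⊤:ℕ∞)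
      (fun r : E => r.1 * D (vx j) (D vt (Φ φ)) r + D (vx j) (Φ φ) r) U :=
    (sm_fst.mul (D_smooth (D_smooth hφ vt) (vx j))).add (D_smooth hφ (vx j))
  have hB : ContDiffOn ℝ (⊤:ℕ∞)
      (fun r : E => ∑ i, r.2 i * D (vx i) (D (vx j) (Φ φ)) r) U :=
    ContDiffOn.sum fun i _ => (sm_coord i).mul (D_smooth (D_smooth hφ (vx j)) (vx i))
  have key1 : D (vx j) (D (vx j) (D vt (Φ φ))) q
      = D vt (D (vx j) (D (vx j) (Φ φ))) q := by
    have e1 : D (vx j) (D (vx j) (D vt (Φ φ))) q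
        = D (vx j) (D vt (D (vx j) (Φ φ))) q :=
      D_congr (fun r hr => D_comm hφ hr (vx j) vt) hq
    rw [e1, D_comm (D_smooth hφ (vx j)) hq (vx j) vt]
  calc D (vx j) (Qx φ j) q
      = D (vx j) (fun r : E => r.1 * D (vx j) (D vt (Φ φ)) r + D (vx j) (Φ φ) r) q
        + D (vx j) (fun r : E => ∑ i, r.2 i * D (vx i) (D (vx j) (Φ φ)) r) q :=
        D_add (smooth_diff hA hq) (smooth_diff hB hq) (vx j)
    _ = (((vx j).1 * D (vx j) (D vt (Φ φ)) q
            + q.1 * D (vx j) (D (vx j) (D vt (Φ φ))) q)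
          + D (vx j) (D (vx j) (Φ φ)) q)
        + ∑ i, ((vx j).2 i * D (vx i) (D (vx j) (Φ φ)) q
          + q.2 i * D (vx j) (D (vx i) (D (vx j) (Φ φ))) q) := by
        rw [D_add (smooth_diff (sm_fst.mul (D_smooth (D_smooth hφ vt) (vx j))) hq)
            (smooth_diff (D_smooth hφ (vx j)) hq) (vx j),
          D_mul_fst (D_smooth (D_smooth hφ vt) (vx j)) hq (vx j),
          D_sum_coord (fun i => D_smooth (D_smooth hφ (vx j)) (vx i)) hq (vx j)]
    _ = _ := by
        have hsum : ∑ i, ((vx j).2 i * D (vx i) (D (vx j) (Φ φ)) q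
              + q.2 i * D (vx j) (D (vx i) (D (vx j) (Φ φ))) q)
            = D (vx j) (D (vx j) (Φ φ)) q
              + ∑ i, q.2 i * D (vx i) (D (vx j) (D (vx j) (Φ φ))) q := by
          rw [Finset.sum_add_distrib]
          congr 1
          · rw [Finset.sum_eq_single j]
            · simp [vx]
            · intro b _ hb
              simp [vx, Pi.single_apply, hb]
            · intro h; exact absurd (Finset.mem_univ j) h
          · exact Finset.sum_congr rfl fun i _ => by
              rw [D_comm (D_smooth hφ (vx j)) hq (vx j) (vx i)]
        rw [hsum, key1]
        have hv : (vx j).1 = 0 := rfl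
        rw [hv]
        ring

/-! ### derivatives of the wave operator field -/

lemma D_Bf {q : E} {ia' c2' : ℝ}
    (hia : HasDerivAt (fun s : ℝ => ((a s) ^ 2)⁻¹) ia' q.1)
    (hc2 : HasDerivAt (fun s : ℝ => 2 * (deriv a s / (a s) ^ 3)) c2' q.1)
    (hq : q ∈ U) (v : E) :
    D v (Bf a φ) q
      = -(ia' * v.1 * D vt (D vt (Φ φ)) q
            + ((a q.1) ^ 2)⁻¹ * D v (D vt (D vt (Φ φ))) q)
        - (c2' * v.1 * D vt (Φ φ) q
            + 2 * (deriv a q.1 / (a q.1) ^ 3) * D v (D vt (Φ φ)) q)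
        + (ia' * v.1 * Lf φ q + ((a q.1) ^ 2)⁻¹ * D v (Lf φ) q) := by
  have d1 : DifferentiableAt ℝ
      (fun r : E => ((a r.1) ^ 2)⁻¹ * D vt (D vt (Φ φ)) r) q :=
    (hia.differentiableAt.comp q differentiableAt_fst).mul
      (smooth_diff (D_smooth (D_smooth hφ vt) vt) hq)
  have d2 : DifferentiableAt ℝ
      (fun r : E => 2 * (deriv a r.1 / (a r.1) ^ 3) * D vt (Φ φ) r) q :=
    (hc2.differentiableAt.comp q differentiableAt_fst).mul
      (smooth_diff (D_smooth hφ vt) hq)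
  have d3 : DifferentiableAt ℝ (fun r : E => ((a r.1) ^ 2)⁻¹ * Lf φ r) q :=
    (hia.differentiableAt.comp q differentiableAt_fst).mul
      (smooth_diff (sm_Lf hφ) hq)
  calc D v (Bf a φ) q
      = D v (fun r : E => -(((a r.1) ^ 2)⁻¹ * D vt (D vt (Φ φ)) r)
          - 2 * (deriv a r.1 / (a r.1) ^ 3) * D vt (Φ φ) r) q
        + D v (fun r : E => ((a r.1) ^ 2)⁻¹ * Lf φ r) q :=
        D_add (f := fun r : E => -(((a r.1) ^ 2)⁻¹ * D vt (D vt (Φ φ)) r)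
            - 2 * (deriv a r.1 / (a r.1) ^ 3) * D vt (Φ φ) r) (d1.neg.sub d2) d3 v
    _ = (D v (fun r : E => -(((a r.1) ^ 2)⁻¹ * D vt (D vt (Φ φ)) r)) q
          - D v (fun r : E => 2 * (deriv a r.1 / (a r.1) ^ 3) * D vt (Φ φ) r) q)
        + D v (fun r : E => ((a r.1) ^ 2)⁻¹ * Lf φ r) q := by
        rw [D_sub (f := fun r : E => -(((a r.1) ^ 2)⁻¹ * D vt (D vt (Φ φ)) r)) d1.neg d2 v]
    _ = _ := by
        rw [D_neg (f := fun r : E => ((a r.1) ^ 2)⁻¹ * D vt (D vt (Φ φ)) r) v,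
          D_mul_time hia (D_smooth (D_smooth hφ vt) vt) hq v,
          D_mul_time hc2 (D_smooth hφ vt) hq v,
          D_mul_time hia (sm_Lf hφ) hq v]

end withphi

end S10

open S10

/-- `[□_g, S]φ = 2(1 + τ∂_τa/a)□_gφ
+ 2(∂_τa/a³ + τ(a∂_τ²a − (∂_τa)²)a^{−4})∂_τφ`, where `S = τ∂_τ + x^i∂_i`. -/
theorem stmt10 (a : ℝ → ℝ) (ha : ContDiffOn ℝ (⊤ : ℕ∞) a (Set.Ioi 0))
    (hapos : ∀ τ > (0 : ℝ), 0 < a τ)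
    (φ : Fld) (hφ : FSmoothOn (Set.Ioi 0) φ) :
    ∀ τ > (0 : ℝ), ∀ x : Fin 3 → ℝ,
      boxc a (fun σ y => σ * dτ φ σ y + ∑ i, y i * dx i φ σ y) τ x
          - (τ * dτ (boxc a φ) τ x + ∑ i, x i * dx i (boxc a φ) τ x)
        = 2 * (1 + τ * deriv a τ / a τ) * boxc a φ τ x
          + 2 * (deriv a τ / (a τ) ^ 3
              + τ * (a τ * deriv (deriv a) τ - (deriv a τ) ^ 2) * ((a τ) ^ 4)⁻¹)
              * dτ φ τ x := by
  intro τ hτ x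
  have hp : ((τ, x) : E) ∈ U := mem_U hτ
  have hΦ : ContDiffOn ℝ (⊤:ℕ∞) (Φ φ) U := hφ
  have hτ' : τ ∈ Set.Ioi (0:ℝ) := hτ
  have hAne : a τ ≠ 0 := ne_of_gt (hapos τ hτ)
  have hA : HasDerivAt a (deriv a τ) τ :=
    ((ha.contDiffAt (isOpen_Ioi.mem_nhds hτ')).differentiableAt
      (by simp)).hasDerivAt
  have hda : ContDiffOn ℝ (⊤:ℕ∞) (deriv a) (Set.Ioi 0) :=
    ha.deriv_of_isOpen isOpen_Ioi (m := (⊤:ℕ∞)) (by exact_mod_cast le_top)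
  have hA' : HasDerivAt (deriv a) (deriv (deriv a) τ) τ :=
    ((hda.contDiffAt (isOpen_Ioi.mem_nhds hτ')).differentiableAt
      (by simp)).hasDerivAt
  have hiaD := (hA.pow 2).inv (pow_ne_zero 2 hAne)
  have hc2D := HasDerivAt.const_mul (2:ℝ) (hA'.div (hA.pow 3) (pow_ne_zero 3 hAne))
  -- unfolding the wave operator applied to the scaling field
  have e_boxS : boxc a (fun σ y => σ * dτ φ σ y + ∑ i, y i * dx i φ σ y) τ x
      = -(((a τ) ^ 2)⁻¹
            * dτ (dτ (fun σ y => σ * dτ φ σ y + ∑ i, y i * dx i φ σ y)) τ x)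
        - 2 * (deriv a τ / (a τ) ^ 3)
            * dτ (fun σ y => σ * dτ φ σ y + ∑ i, y i * dx i φ σ y) τ x
        + ((a τ) ^ 2)⁻¹
            * lap (fun σ y => σ * dτ φ σ y + ∑ i, y i * dx i φ σ y) τ x := rfl
  have eSt : dτ (fun σ y => σ * dτ φ σ y + ∑ i, y i * dx i φ σ y) τ x
      = D vt (Φ φ) (τ, x) + τ * D vt (D vt (Φ φ)) (τ, x)
        + ∑ i, x i * D (vx i) (D vt (Φ φ)) (τ, x) := eq_dS_t hΦ (τ, x) hp
  have eStt : dτ (dτ (fun σ y => σ * dτ φ σ y + ∑ i, y i * dx i φ σ y)) τ x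
      = 2 * D vt (D vt (Φ φ)) (τ, x) + τ * D vt (D vt (D vt (Φ φ))) (τ, x)
        + ∑ i, x i * D (vx i) (D vt (D vt (Φ φ))) (τ, x) := by
    have h0 : dτ (dτ (fun σ y => σ * dτ φ σ y + ∑ i, y i * dx i φ σ y)) τ x
        = D vt (Qt φ) ((τ, x) : E) :=
      dtau_eq (F := dτ (fun σ y => σ * dτ φ σ y + ∑ i, y i * dx i φ σ y))
        (sm_Qt hΦ) (eq_dS_t hΦ) hp
    rw [h0]
    exact D_Qt hΦ hp
  have eLap : lap (fun σ y => σ * dτ φ σ y + ∑ i, y i * dx i φ σ y) τ x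
      = τ * D vt (Lf φ) (τ, x) + 2 * Lf φ (τ, x)
        + ∑ i, x i * D (vx i) (Lf φ) (τ, x) := by
    have h0 : lap (fun σ y => σ * dτ φ σ y + ∑ i, y i * dx i φ σ y) τ x
        = ∑ j, D (vx j) (Qx φ j) ((τ, x) : E) := by
      show (∑ j, dx j (dx j (fun σ y => σ * dτ φ σ y + ∑ i, y i * dx i φ σ y)) τ x) = _
      exact Finset.sum_congr rfl fun j _ =>
        dx_eq (F := dx j (fun σ y => σ * dτ φ σ y + ∑ i, y i * dx i φ σ y))
          (sm_Qx hΦ j) (eq_dS_x hΦ j) hp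
    rw [h0]
    have h1 : ∀ j : Fin 3, D (vx j) (Qx φ j) ((τ, x) : E)
        = τ * D vt (D (vx j) (D (vx j) (Φ φ))) (τ, x)
          + 2 * D (vx j) (D (vx j) (Φ φ)) (τ, x)
          + ∑ i, x i * D (vx i) (D (vx j) (D (vx j) (Φ φ))) (τ, x) :=
      fun j => D_Qx hΦ j hp
    rw [Finset.sum_congr rfl fun j _ => h1 j]
    rw [Finset.sum_add_distrib, Finset.sum_add_distrib]
    congr 1
    · congr 1
      · rw [← Finset.mul_sum]
        congr 1
        exact (D_sum (F := fun j => D (vx j) (D (vx j) (Φ φ)))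
          (fun j => smooth_diff (D_smooth (D_smooth hΦ (vx j)) (vx j)) hp) vt).symm
      · rw [← Finset.mul_sum]
        rfl
    · rw [Finset.sum_comm]
      refine Finset.sum_congr rfl fun i _ => ?_
      rw [← Finset.mul_sum]
      congr 1
      exact (D_sum (F := fun j => D (vx j) (D (vx j) (Φ φ)))
        (fun j => smooth_diff (D_smooth (D_smooth hΦ (vx j)) (vx j)) hp) (vx i)).symm
  have eBox : boxc a φ τ x
      = -(((a τ) ^ 2)⁻¹ * D vt (D vt (Φ φ)) (τ, x))
        - 2 * (deriv a τ / (a τ) ^ 3) * D vt (Φ φ) (τ, x)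
        + ((a τ) ^ 2)⁻¹ * Lf φ (τ, x) := eq_box hΦ (τ, x) hp
  have eDt : dτ φ τ x = D vt (Φ φ) (τ, x) := eq_dt hΦ (τ, x) hp
  have eDbox : dτ (boxc a φ) τ x = D vt (Bf a φ) ((τ, x) : E) :=
    dtau_eq (F := boxc a φ) (sm_Bf hΦ ha hapos) (eq_box hΦ) hp
  have eDxbox : ∀ j : Fin 3, dx j (boxc a φ) τ x = D (vx j) (Bf a φ) ((τ, x) : E) :=
    fun j => dx_eq (F := boxc a φ) (sm_Bf hΦ ha hapos) (eq_box hΦ) hp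
  have eSum : ∑ i, x i * dx i (boxc a φ) τ x
      = -(((a τ) ^ 2)⁻¹ * ∑ i, x i * D (vx i) (D vt (D vt (Φ φ))) (τ, x))
        - 2 * (deriv a τ / (a τ) ^ 3) * ∑ i, x i * D (vx i) (D vt (Φ φ)) (τ, x)
        + ((a τ) ^ 2)⁻¹ * ∑ i, x i * D (vx i) (Lf φ) (τ, x) := by
    have hterm : ∀ j : Fin 3, x j * dx j (boxc a φ) τ x
        = -(((a τ) ^ 2)⁻¹ * (x j * D (vx j) (D vt (D vt (Φ φ))) (τ, x)))
          - 2 * (deriv a τ / (a τ) ^ 3) * (x j * D (vx j) (D vt (Φ φ)) (τ, x))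
          + ((a τ) ^ 2)⁻¹ * (x j * D (vx j) (Lf φ) (τ, x)) := by
      intro j
      rw [eDxbox j, D_Bf hΦ hiaD hc2D hp (vx j)]
      have h0 : (vx j).1 = (0:ℝ) := rfl
      rw [h0]
      ring
    rw [Finset.sum_congr rfl fun j _ => hterm j]
    rw [Finset.sum_add_distrib, Finset.sum_sub_distrib, Finset.sum_neg_distrib,
      ← Finset.mul_sum, ← Finset.mul_sum, ← Finset.mul_sum]
  rw [e_boxS, eStt, eSt, eLap, eDbox, D_Bf hΦ hiaD hc2D hp vt, eSum, eBox, eDt]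
  simp only [show vt.1 = (1:ℝ) from rfl, Pi.pow_apply]
  push_cast
  field_simp
  ring

end
end
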